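/- Let S ≥ 1 be an integer, and for each k = 1, …, S let n_k ≥ 1 be an integer and a_k, b_k be real numbers such that (n_k, a_k, b_k) satisfies one of the following conditions: (i) n_k = 1 and a_k > 0; (ii) n_k = 2, a_k > 0, and a_k b_k > 1; (iii) n_k ≥ 3, a_k > (n_k−2)/(n_k−1), b_k > (n_k−2)/(n_k−1), and a_k > ((n_k−2)b_k − (n_k−3)) / ((n_k−1)b_k − (n_k−2)). Then the block diagonal matrix D^line = diag(D^(n_1)(a_1,b_1), D^(n_2)(a_2,b_2), …, D^(n_S)(a_S,b_S)) is symmetric positive definite. -/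

import Mathlib

open Matrix

/-- The `n × n` tridiagonal matrix with diagonal `(a, 2, 2, …, 2, b)`
(first diagonal entry `a`, last diagonal entry `b`, all other diagonal entries `2`;
for `n = 1` the single entry is `a`), sub- and super-diagonal entries `-1`,
and all remaining entries `0`. -/
def Dmat (n : ℕ) (a b : ℝ) : Matrix (Fin n) (Fin n) ℝ :=
  Matrix.of fun i j =>
    if i = j then (if i.val = 0 then a else if i.val = n - 1 then b else 2)
    else if i.val + 1 = j.val ∨ j.val + 1 = i.val then -1 else 0

lemma Dmat_isHermitian (n : ℕ) (a b : ℝ) : (Dmat n a b).IsHermitian := by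
  show _ᴴ = _
  ext i j
  rcases eq_or_ne i j with rfl | hij
  · simp [Dmat]
  · simp [Dmat, conjTranspose_apply, hij, hij.symm, or_comm]

lemma row0 (m : ℕ) (a b : ℝ) (x : Fin (m+3) → ℝ) :
    ∑ j : Fin (m+3), Dmat (m+3) a b 0 j * x j = a * x 0 - x 1 := by
  rw [Fin.sum_univ_succ, Fin.sum_univ_succ]
  have h0 : Dmat (m+3) a b 0 0 = a := by simp [Dmat]
  have h1 : Dmat (m+3) a b 0 (Fin.succ 0) = -1 := by
    simp only [Dmat, of_apply, Fin.ext_iff]; simp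
  have h2 : ∀ j : Fin (m+1), Dmat (m+3) a b 0 j.succ.succ = 0 := by
    intro j
    simp only [Dmat, of_apply, Fin.ext_iff, Fin.val_succ, Fin.val_zero]; simp
  rw [h0, h1, Finset.sum_congr rfl (fun j _ => by rw [h2 j]), Fin.succ_zero_eq_one]
  simp; ring

lemma succ_succ (m : ℕ) (a b : ℝ) (i j : Fin (m+2)) :
    Dmat (m+3) a b i.succ j.succ
      = Dmat (m+2) (2-1/a) b i j + (if i.val = 0 ∧ j.val = 0 then 1/a else 0) := by
  simp only [Dmat, of_apply, Fin.ext_iff, Fin.val_succ]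
  split_ifs <;> first | ring1 | omega | contradiction | simp_all | (simp_all; omega)

lemma col0 (m : ℕ) (a b : ℝ) (i : Fin (m+2)) :
    Dmat (m+3) a b i.succ 0 = if i.val = 0 then -1 else 0 := by
  simp only [Dmat, of_apply, Fin.ext_iff, Fin.val_succ, Fin.val_zero]
  split_ifs <;> first | ring1 | omega | contradiction | simp_all | (simp_all; omega)

lemma key (m : ℕ) (a b : ℝ) (ha : a ≠ 0) (x : Fin (m+3) → ℝ) :
    dotProduct x ((Dmat (m+3) a b) *ᵥ x)
      = a * (x 0 - x 1 / a)^2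
        + dotProduct (fun i => x i.succ) ((Dmat (m+2) (2-1/a) b) *ᵥ (fun i => x i.succ)) := by
  simp only [dotProduct, mulVec, dotProduct]
  rw [Fin.sum_univ_succ]
  rw [row0]
  have hrow : ∀ i : Fin (m+2),
      ∑ j : Fin (m+3), Dmat (m+3) a b i.succ j * x j
        = (if i.val = 0 then -x 0 + (1/a) * x (Fin.succ 0) else 0)
          + ∑ j : Fin (m+2), Dmat (m+2) (2-1/a) b i j * x j.succ := by
    intro i
    rw [Fin.sum_univ_succ]
    rw [col0]
    have : ∀ j : Fin (m+2), Dmat (m+3) a b i.succ j.succ * x j.succ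
        = Dmat (m+2) (2-1/a) b i j * x j.succ
          + (if i.val = 0 ∧ j.val = 0 then (1/a) * x j.succ else 0) := by
      intro j
      rw [succ_succ]
      split_ifs <;> ring
    rw [Finset.sum_congr rfl (fun j _ => this j), Finset.sum_add_distrib]
    have hsingle : ∑ j : Fin (m+2), (if i.val = 0 ∧ j.val = 0 then (1/a) * x j.succ else 0)
        = if i.val = 0 then (1/a) * x (Fin.succ 0) else 0 := by
      rw [Fin.sum_univ_succ]
      simp [Fin.val_succ]
    rw [hsingle]
    split_ifs <;> ring
  rw [Finset.sum_congr rfl (fun i _ => by rw [hrow i, mul_add])]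
  rw [Finset.sum_add_distrib]
  have hsingle2 : ∑ i : Fin (m+2),
      x i.succ * (if i.val = 0 then -x 0 + (1/a) * x (Fin.succ 0) else 0)
        = x (Fin.succ 0) * (-x 0 + (1/a) * x (Fin.succ 0)) := by
    rw [Fin.sum_univ_succ]
    simp [Fin.val_succ]
  rw [hsingle2, Fin.succ_zero_eq_one]
  field_simp
  ring

def good : ℕ → ℝ → ℝ → Prop
  | 0, _, _ => True
  | 1, a, _ => 0 < a
  | 2, a, b => 0 < a ∧ 1 < a * b
  | (n+3), a, b => 0 < a ∧ good (n+2) (2 - 1/a) b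

lemma dmat_posdef : ∀ (m : ℕ) (a b : ℝ), good (m+1) a b → (Dmat (m+1) a b).PosDef
  | 0, a, b, h => by
    have ha : 0 < a := h
    refine Matrix.PosDef.of_dotProduct_mulVec_pos (Dmat_isHermitian _ _ _) fun x hx => ?_
    have hx0 : x 0 ≠ 0 := by
      intro h0
      exact hx (funext fun i => by fin_cases i; exact h0)
    have : dotProduct (star x) ((Dmat 1 a b) *ᵥ x) = a * (x 0 * x 0) := by
      simp [dotProduct, mulVec, Fin.sum_univ_one, Dmat, star_trivial]
      ring
    rw [this]
    exact mul_pos ha (mul_self_pos.2 hx0)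
  | 1, a, b, h => by
    obtain ⟨ha, hab⟩ := h
    show (Dmat 2 a b).PosDef
    refine Matrix.PosDef.of_dotProduct_mulVec_pos (Dmat_isHermitian _ _ _) fun x hx => ?_
    have hD : dotProduct (star x) ((Dmat 2 a b) *ᵥ x)
        = a * (x 0 * x 0) - 2 * (x 0 * x 1) + b * (x 1 * x 1) := by
      have e00 : Dmat 2 a b 0 0 = a := by simp [Dmat]
      have e01 : Dmat 2 a b 0 1 = -1 := by simp only [Dmat, of_apply, Fin.ext_iff]; simp
      have e10 : Dmat 2 a b 1 0 = -1 := by simp only [Dmat, of_apply, Fin.ext_iff]; simp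
      have e11 : Dmat 2 a b 1 1 = b := by simp only [Dmat, of_apply, Fin.ext_iff]; simp
      simp only [dotProduct, mulVec, dotProduct, Fin.sum_univ_two, star_trivial,
        Pi.star_apply, e00, e01, e10, e11]
      ring
    rw [hD]
    by_cases h1 : x 1 = 0
    · have hx0 : x 0 ≠ 0 := by
        intro h0
        exact hx (funext fun i => by fin_cases i <;> assumption)
      rw [h1]
      nlinarith [mul_pos ha (mul_self_pos.2 hx0)]
    · nlinarith [sq_nonneg (a * x 0 - x 1), mul_pos (sub_pos.2 hab) (mul_self_pos.2 h1)]
  | (m+2), a, b, h => by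
    obtain ⟨ha, hg⟩ := h
    have ih : (Dmat (m+2) (2-1/a) b).PosDef := dmat_posdef (m+1) _ _ hg
    refine Matrix.PosDef.of_dotProduct_mulVec_pos (Dmat_isHermitian _ _ _) fun x hx => ?_
    have hs : star x = x := star_trivial x
    rw [hs]
    show 0 < dotProduct x ((Dmat (m+3) a b) *ᵥ x)
    rw [key m a b (ne_of_gt ha) x]
    by_cases hy : (fun i : Fin (m+2) => x i.succ) = 0
    · have hx1 : ∀ i : Fin (m+2), x i.succ = 0 := fun i => congrFun hy i
      have hx0 : x 0 ≠ 0 := by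
        intro h0
        apply hx
        funext i
        induction i using Fin.cases with
        | zero => exact h0
        | succ j => exact hx1 j
      have hz : dotProduct (fun i : Fin (m+2) => x i.succ)
          ((Dmat (m+2) (2-1/a) b) *ᵥ (fun i => x i.succ)) = 0 := by
        rw [hy]
        simp
      rw [hz, add_zero]
      have h1 : x 1 = 0 := by
        rw [← Fin.succ_zero_eq_one]
        exact hx1 0
      rw [h1]
      have : (0:ℝ) < (x 0 - 0 / a)^2 := by
        have : x 0 - 0 / a ≠ 0 := by simpa using hx0
        positivity
      exact mul_pos ha this
    · have h1 : 0 < dotProduct (fun i : Fin (m+2) => x i.succ)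
          ((Dmat (m+2) (2-1/a) b) *ᵥ (fun i => x i.succ)) := by
        have := ih.dotProduct_mulVec_pos (x := fun i => x i.succ) hy
        rwa [star_trivial] at this
      have h2 : 0 ≤ a * (x 0 - x 1 / a)^2 := mul_nonneg ha.le (sq_nonneg _)
      linarith

lemma good_of : ∀ (m : ℕ) (a b : ℝ),
    (m : ℝ) < ((m:ℝ)+1) * a →
    (m:ℝ) * (a + b) + 1 < ((m:ℝ)+1) * a * b + (m:ℝ) →
    good (m+2) a b
  | 0, a, b, h1, h2 => by
    norm_num at h1 h2
    exact ⟨h1, h2⟩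
  | (m+1), a, b, h1, h2 => by
    push_cast at h1 h2
    have hm : (0:ℝ) ≤ (m:ℝ) := Nat.cast_nonneg m
    have ha : 0 < a := by nlinarith
    refine ⟨ha, good_of m (2 - 1/a) b ?_ ?_⟩
    · have hd : ((m:ℝ)+1)*(2-1/a) - m = (((m:ℝ)+2)*a - ((m:ℝ)+1))/a := by
        field_simp
        ring
      have hpos : 0 < (((m:ℝ)+2)*a - ((m:ℝ)+1))/a :=
        div_pos (by linarith) ha
      linarith [hd ▸ hpos]
    · have hd : (((m:ℝ)+1)*(2-1/a)*b + (m:ℝ)) - ((m:ℝ)*((2-1/a)+b) + 1)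
          = ((((m:ℝ)+2)*a*b + ((m:ℝ)+1)) - (((m:ℝ)+1)*(a+b) + 1))/a := by
        field_simp
        ring
      have hpos : 0 < ((((m:ℝ)+2)*a*b + ((m:ℝ)+1)) - (((m:ℝ)+1)*(a+b) + 1))/a :=
        div_pos (by linarith) ha
      linarith [hd ▸ hpos]

theorem stmt4 (S : ℕ) (hS : 1 ≤ S) (n : Fin S → ℕ) (a b : Fin S → ℝ)
    (h : ∀ k : Fin S,
      (n k = 1 ∧ 0 < a k) ∨
      (n k = 2 ∧ 0 < a k ∧ 1 < a k * b k) ∨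
      (3 ≤ n k ∧ a k > ((n k : ℝ) - 2) / ((n k : ℝ) - 1) ∧
        b k > ((n k : ℝ) - 2) / ((n k : ℝ) - 1) ∧
        a k > (((n k : ℝ) - 2) * b k - ((n k : ℝ) - 3)) /
              (((n k : ℝ) - 1) * b k - ((n k : ℝ) - 2)))) :
    (Matrix.blockDiagonal' (fun k : Fin S => Dmat (n k) (a k) (b k))).PosDef := by
  have hpd : ∀ k, (Dmat (n k) (a k) (b k)).PosDef := by
    intro k
    rcases h k with ⟨hn, ha⟩ | ⟨hn, ha, hab⟩ | ⟨hn, ha, hb, hab⟩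
    · rw [hn]
      exact dmat_posdef 0 _ _ ha
    · rw [hn]
      exact dmat_posdef 1 _ _ ⟨ha, hab⟩
    · obtain ⟨m, hm⟩ : ∃ m, n k = m + 3 := ⟨n k - 3, by omega⟩
      rw [hm] at ha hb hab ⊢
      push_cast at ha hb hab
      have hm0 : (0:ℝ) ≤ (m:ℝ) := Nat.cast_nonneg m
      have hden1 : (0:ℝ) < (m:ℝ) + 3 - 1 := by linarith
      have hb1 : ((m:ℝ) + 3 - 2) < b k * ((m:ℝ) + 3 - 1) := (div_lt_iff₀ hden1).mp hb
      have ha1 : ((m:ℝ) + 3 - 2) < a k * ((m:ℝ) + 3 - 1) := (div_lt_iff₀ hden1).mp ha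
      have hden2 : (0:ℝ) < ((m:ℝ) + 3 - 1) * b k - ((m:ℝ) + 3 - 2) := by linarith
      have hab1 : ((m:ℝ) + 3 - 2) * b k - ((m:ℝ) + 3 - 3)
          < a k * (((m:ℝ) + 3 - 1) * b k - ((m:ℝ) + 3 - 2)) := (div_lt_iff₀ hden2).mp hab
      have : good (m + 1 + 2) (a k) (b k) := by
        apply good_of (m+1) (a k) (b k)
        · push_cast
          linarith
        · push_cast
          nlinarith [hab1]
      exact dmat_posdef (m+2) _ _ this
  refine Matrix.PosDef.of_dotProduct_mulVec_pos ?_ ?_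
  · show _ᴴ = _
    ext ⟨k, i⟩ ⟨k', j⟩
    rcases eq_or_ne k k' with rfl | hkk
    · simp only [conjTranspose_apply, blockDiagonal'_apply_eq, star_trivial]
      exact congrFun (congrFun (hpd k).1 i) j
    · simp [blockDiagonal'_apply_ne _ _ _ hkk, blockDiagonal'_apply_ne _ _ _ hkk.symm]
  · intro x hx
    rw [star_trivial]
    have inner : ∀ (k : Fin S) (i : Fin (n k)),
        (∑ p ∈ Finset.univ.sigma (fun _ => Finset.univ),
            blockDiagonal' (fun k => Dmat (n k) (a k) (b k)) ⟨k,i⟩ p * x p)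
          = ∑ j : Fin (n k), Dmat (n k) (a k) (b k) i j * x ⟨k,j⟩ := by
      intro k i
      rw [Finset.sum_sigma]
      rw [Finset.sum_eq_single k]
      · exact Finset.sum_congr rfl fun j _ => by rw [blockDiagonal'_apply_eq]
      · intro k' _ hk'
        exact Finset.sum_eq_zero fun j _ => by
          rw [blockDiagonal'_apply_ne _ _ _ (Ne.symm hk'), zero_mul]
      · intro hk
        exact absurd (Finset.mem_univ k) hk
    have hsum : dotProduct x ((blockDiagonal' (fun k => Dmat (n k) (a k) (b k))) *ᵥ x)
        = ∑ k : Fin S, dotProduct (fun i => x ⟨k,i⟩)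
            ((Dmat (n k) (a k) (b k)) *ᵥ (fun i => x ⟨k,i⟩)) := by
      simp only [dotProduct, mulVec, dotProduct]
      rw [← Finset.univ_sigma_univ, Finset.sum_sigma]
      exact Finset.sum_congr rfl fun k _ =>
        Finset.sum_congr rfl fun i _ => by rw [inner k i]
    rw [hsum]
    obtain ⟨p, hp⟩ : ∃ p, x p ≠ 0 := by
      by_contra hc
      push_neg at hc
      exact hx (funext hc)
    apply Finset.sum_pos'
    · intro k _
      have := (hpd k).posSemidef.dotProduct_mulVec_nonneg (fun i => x ⟨k,i⟩)
      rwa [star_trivial] at this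
    · refine ⟨p.1, Finset.mem_univ _, ?_⟩
      have hne : (fun i => x ⟨p.1, i⟩) ≠ 0 := by
        intro hz
        apply hp
        have := congrFun hz p.2
        simpa using this
      have := (hpd p.1).dotProduct_mulVec_pos (x := fun i => x ⟨p.1,i⟩) hne
      rwa [star_trivial] at this
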